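/- Let q ≥ 2, n ≥ 2, 0 ≤ i ≤ j ≤ n with j ≥ 1, let f : Σ_q^n → ℝ belong to U_{[i,j]}(n,q), let r ∈ {1,…,n}, and let m ∈ Σ_q. If f_k^r ≡ 0 for every k ∈ Σ_q \ {m}, then f_m^r belongs to U_{[i,j−1]}(n−1,q), where U_{[i,j−1]}(n−1,q) is understood to be the zero space if i > j−1. -/

import Mathlib

/-- `f` belongs to the eigenspace `U_k(n,q)` of the Hamming graph `H(n,q)`,
i.e. `λ_k(n,q) · f(x) = Σ_{y ∈ N(x)} f(y)` for every vertex `x`, where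
`λ_k(n,q) = n(q-1) - q·k` and `N(x)` is the set of vertices at Hamming distance 1 from `x`. -/
def inU (n q k : ℕ) (f : (Fin n → Fin q) → ℝ) : Prop :=
  ∀ x : Fin n → Fin q,
    ((n : ℝ) * ((q : ℝ) - 1) - (q : ℝ) * (k : ℝ)) * f x =
      ∑ y ∈ Finset.univ.filter (fun y : Fin n → Fin q => hammingDist x y = 1), f y

/-- `f` belongs to the direct sum `U_{[i,j]}(n,q) = U_i(n,q) ⊕ … ⊕ U_j(n,q)`,
i.e. `f = Σ_{k=i}^{j} g_k` with `g_k ∈ U_k(n,q)`. -/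
def inUIJ (n q i j : ℕ) (f : (Fin n → Fin q) → ℝ) : Prop :=
  ∃ g : ℕ → (Fin n → Fin q) → ℝ,
    (∀ k ∈ Finset.Icc i j, inU n q k (g k)) ∧ f = ∑ k ∈ Finset.Icc i j, g k

/-- The cardinality of the support of `f`. -/
noncomputable def suppCard (n q : ℕ) (f : (Fin n → Fin q) → ℝ) : ℕ :=
  (Finset.univ.filter (fun x : Fin n → Fin q => f x ≠ 0)).card

/-- The restriction `f_k^r` of `f : Σ_q^{n+1} → ℝ` obtained by fixing the coordinate `r`
to the value `k`. -/
def restrictAt {n q : ℕ} (f : (Fin (n + 1) → Fin q) → ℝ) (r : Fin (n + 1)) (k : Fin q) :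
    (Fin n → Fin q) → ℝ :=
  fun y => f (r.insertNth k y)

open Finset Polynomial

namespace Stmt16

variable {q n : ℕ}

noncomputable def adjE (n q : ℕ) : Module.End ℝ ((Fin n → Fin q) → ℝ) where
  toFun f := fun x => ∑ y ∈ Finset.univ.filter (fun y => hammingDist x y = 1), f y
  map_add' f g := by funext x; simp [Finset.sum_add_distrib]
  map_smul' c f := by funext x; simp [Finset.mul_sum]

lemma adjE_apply (f : (Fin n → Fin q) → ℝ) (x : Fin n → Fin q) :
    adjE n q f x = ∑ y ∈ Finset.univ.filter (fun y => hammingDist x y = 1), f y := rfl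

lemma hd_succAbove (r : Fin (n+1)) (x y : Fin (n+1) → Fin q) :
    hammingDist x y
      = (if x r = y r then 0 else 1) + hammingDist (r.removeNth x) (r.removeNth y) := by
  classical
  have h1 : ∀ (u v : Fin (n+1) → Fin q),
      hammingDist u v = ∑ i, if u i ≠ v i then 1 else 0 := by
    intro u v
    simp [hammingDist, Finset.card_filter]
  have h2 : ∀ (u v : Fin n → Fin q),
      hammingDist u v = ∑ i, if u i ≠ v i then 1 else 0 := by
    intro u v
    simp [hammingDist, Finset.card_filter]
  rw [h1, h2, Fin.sum_univ_succAbove _ r]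
  simp only [Fin.removeNth]
  congr 1
  by_cases h : x r = y r <;> simp [h]

lemma update_eq_insertNth (r : Fin (n+1)) (x : Fin (n+1) → Fin q) (k : Fin q) :
    Function.update x r k = r.insertNth k (r.removeNth x) := by
  funext i
  by_cases h : i = r
  · subst h; simp
  · obtain ⟨j, rfl⟩ := Fin.exists_succAbove_eq h
    rw [Function.update_of_ne h, Fin.insertNth_apply_succAbove]
    rfl

lemma removeNth_update (r : Fin (n+1)) (x : Fin (n+1) → Fin q) (k : Fin q) :
    r.removeNth (Function.update x r k) = r.removeNth x := by
  rw [update_eq_insertNth, Fin.removeNth_insertNth]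

/-- splitting of the adjacency operator -/
lemma adjE_split (r : Fin (n+1)) (f : (Fin (n+1) → Fin q) → ℝ) (x : Fin (n+1) → Fin q) :
    adjE (n+1) q f x
      = (∑ k ∈ Finset.univ.erase (x r), f (Function.update x r k))
        + adjE n q (restrictAt f r (x r)) (r.removeNth x) := by
  classical
  rw [adjE_apply, adjE_apply]
  rw [← Finset.sum_filter_add_sum_filter_not (Finset.univ.filter
    (fun y => hammingDist x y = 1)) (fun y => y r = x r)]
  rw [add_comm]
  congr 1
  · -- update part : y with y r ≠ x r
    refine Finset.sum_bij' (fun y _ => y r) (fun k _ => Function.update x r k) ?_ ?_ ?_ ?_ ?_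
    · intro y hy
      simp only [Finset.mem_filter, Finset.mem_univ, true_and] at hy
      simp only [Finset.mem_erase, Finset.mem_univ, and_true]
      exact fun h => hy.2 (h ▸ rfl)
    · intro k hk
      simp only [Finset.mem_erase, Finset.mem_univ, and_true] at hk
      simp only [Finset.mem_filter, Finset.mem_univ, true_and]
      have hxk : ¬ x r = k := fun h => hk h.symm
      constructor
      · rw [hd_succAbove r, removeNth_update, Function.update_self, if_neg hxk,
          hammingDist_self]
      · rw [Function.update_self]; exact fun h => hxk h.symm
    · intro y hy
      simp only [Finset.mem_filter, Finset.mem_univ, true_and] at hy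
      have hdy := hd_succAbove r x y
      rw [hy.1, if_neg (fun h => hy.2 h.symm)] at hdy
      have hrem : r.removeNth x = r.removeNth y :=
        eq_of_hammingDist_eq_zero (by omega)
      show Function.update x r (y r) = y
      rw [update_eq_insertNth, hrem, Fin.insertNth_self_removeNth]
    · intro k hk
      exact Function.update_self r k x
    · intro y hy
      simp only [Finset.mem_filter, Finset.mem_univ, true_and] at hy
      have hdy := hd_succAbove r x y
      rw [hy.1, if_neg (fun h => hy.2 h.symm)] at hdy
      have hrem : r.removeNth x = r.removeNth y :=
        eq_of_hammingDist_eq_zero (by omega)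
      show f y = f (Function.update x r (y r))
      rw [update_eq_insertNth, hrem, Fin.insertNth_self_removeNth]
  · -- slice part : y with y r = x r
    refine Finset.sum_bij' (fun y _ => r.removeNth y) (fun z _ => r.insertNth (x r) z)
      ?_ ?_ ?_ ?_ ?_
    · intro y hy
      simp only [Finset.mem_filter, Finset.mem_univ, true_and] at hy
      simp only [Finset.mem_filter, Finset.mem_univ, true_and]
      have hdy := hd_succAbove r x y
      rw [hy.1, if_pos hy.2.symm] at hdy
      omega
    · intro z hz
      simp only [Finset.mem_filter, Finset.mem_univ, true_and] at hz
      simp only [Finset.mem_filter, Finset.mem_univ, true_and]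
      constructor
      · rw [hd_succAbove r, Fin.insertNth_apply_same, if_pos rfl,
          Fin.removeNth_insertNth]
        omega
      · rw [Fin.insertNth_apply_same]
    · intro y hy
      simp only [Finset.mem_filter, Finset.mem_univ, true_and] at hy
      show r.insertNth (x r) (r.removeNth y) = y
      rw [← hy.2, Fin.insertNth_self_removeNth]
    · intro z hz
      exact Fin.removeNth_insertNth (α := fun _ => Fin q) r (x r) z
    · intro y hy
      simp only [Finset.mem_filter, Finset.mem_univ, true_and] at hy
      show f y = restrictAt f r (x r) (r.removeNth y)
      simp only [restrictAt]
      rw [← hy.2, Fin.insertNth_self_removeNth]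


/-- coordinate-`r` part of the adjacency operator -/
noncomputable def Bop (r : Fin (n+1)) : Module.End ℝ ((Fin (n+1) → Fin q) → ℝ) where
  toFun f := fun x => ∑ k ∈ Finset.univ.erase (x r), f (Function.update x r k)
  map_add' f g := by funext x; simp [Finset.sum_add_distrib]
  map_smul' c f := by funext x; simp [Finset.mul_sum, mul_sub]

/-- the rest of the adjacency operator -/
noncomputable def Cop (r : Fin (n+1)) : Module.End ℝ ((Fin (n+1) → Fin q) → ℝ) :=
  adjE (n+1) q - Bop r

/-- extension of a function constantly along coordinate `r` -/
def FlL (r : Fin (n+1)) (h : (Fin n → Fin q) → ℝ) : (Fin (n+1) → Fin q) → ℝ :=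
  fun x => h (r.removeNth x)

@[simp] lemma restrictAt_add (f g : (Fin (n+1) → Fin q) → ℝ) (r : Fin (n+1)) (c : Fin q) :
    restrictAt (f + g) r c = restrictAt f r c + restrictAt g r c := rfl

@[simp] lemma restrictAt_sub (f g : (Fin (n+1) → Fin q) → ℝ) (r : Fin (n+1)) (c : Fin q) :
    restrictAt (f - g) r c = restrictAt f r c - restrictAt g r c := rfl

@[simp] lemma restrictAt_smul (a : ℝ) (f : (Fin (n+1) → Fin q) → ℝ) (r : Fin (n+1)) (c : Fin q) :
    restrictAt (a • f) r c = a • restrictAt f r c := rfl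

@[simp] lemma restrictAt_zero (r : Fin (n+1)) (c : Fin q) :
    restrictAt (0 : (Fin (n+1) → Fin q) → ℝ) r c = 0 := rfl

lemma restrictAt_sum {ι : Type*} (s : Finset ι) (g : ι → (Fin (n+1) → Fin q) → ℝ)
    (r : Fin (n+1)) (c : Fin q) :
    restrictAt (∑ k ∈ s, g k) r c = ∑ k ∈ s, restrictAt (g k) r c := by
  funext z
  simp [restrictAt, Finset.sum_apply]

@[simp] lemma slice_FlL (r : Fin (n+1)) (h : (Fin n → Fin q) → ℝ) (c : Fin q) :
    restrictAt (FlL r h) r c = h := by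
  funext z
  simp [restrictAt, FlL]

lemma eq_of_slices {f g : (Fin (n+1) → Fin q) → ℝ} (r : Fin (n+1))
    (h : ∀ c, restrictAt f r c = restrictAt g r c) : f = g := by
  funext x
  have hx : x = r.insertNth (x r) (r.removeNth x) := (Fin.insertNth_self_removeNth r x).symm
  rw [hx]
  exact congrFun (h (x r)) (r.removeNth x)

lemma update_insertNth (r : Fin (n+1)) (c k : Fin q) (z : Fin n → Fin q) :
    Function.update (Fin.insertNth (α := fun _ => Fin q) r c z) r k = r.insertNth k z := by
  funext i
  by_cases hi : i = r
  · subst hi; rw [Function.update_self, Fin.insertNth_apply_same]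
  · obtain ⟨jj, rfl⟩ := Fin.exists_succAbove_eq hi
    rw [Function.update_of_ne (Fin.succAbove_ne r jj), Fin.insertNth_apply_succAbove,
      Fin.insertNth_apply_succAbove]

lemma slice_B (r : Fin (n+1)) (f : (Fin (n+1) → Fin q) → ℝ) (c : Fin q) :
    restrictAt (Bop r f) r c = ∑ k ∈ Finset.univ.erase c, restrictAt f r k := by
  funext z
  simp only [restrictAt, Bop, LinearMap.coe_mk, AddHom.coe_mk, Finset.sum_apply]
  rw [Fin.insertNth_apply_same]
  refine Finset.sum_congr rfl fun k hk => ?_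
  rw [update_insertNth]

lemma slice_adj (r : Fin (n+1)) (f : (Fin (n+1) → Fin q) → ℝ) (c : Fin q) :
    restrictAt (adjE (n+1) q f) r c
      = (∑ k ∈ Finset.univ.erase c, restrictAt f r k) + adjE n q (restrictAt f r c) := by
  funext z
  have := adjE_split r f (r.insertNth c z)
  simp only [restrictAt]
  rw [this, Fin.insertNth_apply_same, Fin.removeNth_insertNth]
  simp only [Pi.add_apply, Finset.sum_apply]
  congr 1
  refine Finset.sum_congr rfl fun k hk => ?_
  rw [update_insertNth]
  rfl

lemma slice_C (r : Fin (n+1)) (f : (Fin (n+1) → Fin q) → ℝ) (c : Fin q) :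
    restrictAt (Cop r f) r c = adjE n q (restrictAt f r c) := by
  simp only [Cop, LinearMap.sub_apply, restrictAt_sub, slice_adj, slice_B]
  abel

lemma BC_comm (r : Fin (n+1)) (f : (Fin (n+1) → Fin q) → ℝ) :
    Bop r (Cop r f) = Cop r (Bop r f) := by
  refine eq_of_slices r fun c => ?_
  rw [slice_B, slice_C, slice_B]
  rw [map_sum (adjE n q) _ _]
  exact Finset.sum_congr rfl fun k _ => (slice_C r f k)

lemma slice_pow (r : Fin (n+1)) (t : ℕ) (f : (Fin (n+1) → Fin q) → ℝ) (c : Fin q) :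
    restrictAt ((Cop r ^ t) f) r c = ((adjE n q) ^ t) (restrictAt f r c) := by
  induction t generalizing f with
  | zero => simp
  | succ t ih =>
    rw [pow_succ, pow_succ, Module.End.mul_apply, Module.End.mul_apply, ih, slice_C]

lemma slice_aeval (r : Fin (n+1)) (p : ℝ[X]) (f : (Fin (n+1) → Fin q) → ℝ) (c : Fin q) :
    restrictAt (Polynomial.aeval (Cop r) p f) r c
      = Polynomial.aeval (adjE n q) p (restrictAt f r c) := by
  induction p using Polynomial.induction_on' with
  | add p1 p2 h1 h2 =>
    rw [map_add, LinearMap.add_apply, restrictAt_add, h1, h2, map_add, LinearMap.add_apply]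
  | monomial t a =>
    rw [Polynomial.aeval_monomial, Polynomial.aeval_monomial]
    simp only [Module.End.mul_apply, Module.algebraMap_end_apply]
    rw [restrictAt_smul, slice_pow]


lemma Bop_FlL (hq1 : 1 ≤ q) (r : Fin (n+1)) (h : (Fin n → Fin q) → ℝ) :
    Bop r (FlL r h) = ((q:ℝ)-1) • FlL r h := by
  funext x
  show ∑ k ∈ Finset.univ.erase (x r), FlL r h (Function.update x r k) = _
  have hcong : ∀ k ∈ Finset.univ.erase (x r),
      FlL r h (Function.update x r k) = h (r.removeNth x) := by
    intro k _
    simp [FlL, removeNth_update]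
  rw [Finset.sum_congr rfl hcong, Finset.sum_const,
    Finset.card_erase_of_mem (Finset.mem_univ _)]
  simp only [Finset.card_univ, Fintype.card_fin, nsmul_eq_mul, Pi.smul_apply, FlL,
    smul_eq_mul]
  rw [Nat.cast_sub hq1]
  norm_num

lemma Bop_eq (r : Fin (n+1)) (f : (Fin (n+1) → Fin q) → ℝ) :
    Bop r f = FlL r (∑ c : Fin q, restrictAt f r c) - f := by
  funext x
  show ∑ k ∈ Finset.univ.erase (x r), f (Function.update x r k) = _
  rw [Finset.sum_erase_eq_sub (Finset.mem_univ _), Function.update_eq_self]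
  simp only [Pi.sub_apply, FlL, Finset.sum_apply]
  congr 1
  refine Finset.sum_congr rfl fun c _ => ?_
  rw [update_eq_insertNth]
  rfl

lemma switch (r : Fin (n+1)) (s : Finset ℕ) (c : ℕ → ℝ) (β : ℝ)
    (f : (Fin (n+1) → Fin q) → ℝ) (hB : Bop r f = β • f) :
    Polynomial.aeval (adjE (n+1) q) (∏ k ∈ s, (X - C (c k))) f
      = Polynomial.aeval (Cop r) (∏ k ∈ s, (X - C (c k - β))) f
    ∧ Bop r (Polynomial.aeval (Cop r) (∏ k ∈ s, (X - C (c k - β))) f)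
        = β • Polynomial.aeval (Cop r) (∏ k ∈ s, (X - C (c k - β))) f := by
  classical
  have hXC : ∀ (T : Module.End ℝ ((Fin (n+1) → Fin q) → ℝ)) (v : ℝ)
      (w : (Fin (n+1) → Fin q) → ℝ),
      Polynomial.aeval T (X - C v) w = T w - v • w := by
    intro T v w
    rw [map_sub, LinearMap.sub_apply, Polynomial.aeval_X, Polynomial.aeval_C,
      Module.algebraMap_end_apply]
  induction s using Finset.induction_on with
  | empty =>
    constructor
    · simp
    · simpa using hB
  | @insert a s ha ih =>
    obtain ⟨ih1, ih2⟩ := ih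
    rw [Finset.prod_insert ha, Finset.prod_insert ha, map_mul, map_mul,
      Module.End.mul_apply, Module.End.mul_apply, ih1]
    set u := Polynomial.aeval (Cop r) (∏ k ∈ s, (X - C (c k - β))) f with hu
    have hA : adjE (n+1) q u = Bop r u + Cop r u := by
      simp [Cop]
    constructor
    · rw [hXC, hXC, hA, ih2, sub_smul]
      abel
    · rw [hXC, map_sub, map_smul, ih2, BC_comm, ih2, map_smul, smul_sub,
        smul_smul, smul_smul, mul_comm]


/-- the eigenvalues -/
noncomputable def muR (n q k : ℕ) : ℝ := (n:ℝ) * ((q:ℝ)-1) - (q:ℝ)*(k:ℝ)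

theorem minpoly_adj (q : ℕ) (hq1 : 1 ≤ q) :
    ∀ n (f : (Fin n → Fin q) → ℝ),
      Polynomial.aeval (adjE n q) (∏ k ∈ Finset.range (n+1), (X - C (muR n q k))) f = 0 := by
  intro n
  induction n with
  | zero =>
    intro f
    have h0 : muR 0 q 0 = 0 := by simp [muR]
    rw [Finset.prod_range_one, h0]
    have hA : adjE 0 q f = 0 := by
      funext x
      rw [adjE_apply]
      have he : Finset.univ.filter (fun y => hammingDist x y = 1) = ∅ := by
        rw [Finset.filter_eq_empty_iff]
        intro y _
        have : y = x := funext fun i => i.elim0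
        subst this
        simp
      rw [he, Finset.sum_empty]
      rfl
    rw [map_sub, LinearMap.sub_apply, Polynomial.aeval_X, hA]
    simp
  | succ n ih =>
    intro f
    have hq0 : (q:ℝ) ≠ 0 := by
      exact Nat.cast_ne_zero.mpr (by omega)
    set r : Fin (n+1) := 0 with hr
    set t : (Fin n → Fin q) → ℝ := ∑ c : Fin q, restrictAt f r c with ht
    set fp : (Fin (n+1) → Fin q) → ℝ := (q:ℝ)⁻¹ • FlL r t with hfp
    set fm : (Fin (n+1) → Fin q) → ℝ := f - fp with hfm
    have hBp : Bop r fp = ((q:ℝ)-1) • fp := by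
      rw [hfp, map_smul, Bop_FlL hq1, smul_comm]
    have hBf : Bop r f = FlL r t - f := by rw [Bop_eq, ht]
    have hBm : Bop r fm = (-1 : ℝ) • fm := by
      rw [hfm, map_sub, hBf, hBp, hfp, smul_smul,
        show ((q:ℝ)-1) * (q:ℝ)⁻¹ = 1 - (q:ℝ)⁻¹ by field_simp,
        sub_smul, one_smul, neg_smul, one_smul, neg_sub]
      abel
    -- the two switched polynomials
    have hswp := switch r (Finset.range (n+2)) (fun k => muR (n+1) q k) ((q:ℝ)-1) fp hBp
    have hswm := switch r (Finset.range (n+2)) (fun k => muR (n+1) q k) (-1 : ℝ) fm hBm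
    have hzero : ∀ g : (Fin (n+1) → Fin q) → ℝ,
        Polynomial.aeval (Cop r) (∏ k ∈ Finset.range (n+1), (X - C (muR n q k))) g = 0 := by
      intro g
      refine eq_of_slices r fun c => ?_
      rw [slice_aeval, ih, restrictAt_zero]
    have hp : Polynomial.aeval (adjE (n+1) q)
        (∏ k ∈ Finset.range (n+2), (X - C (muR (n+1) q k))) fp = 0 := by
      rw [hswp.1]
      have hμ : ∀ k, muR (n+1) q k - ((q:ℝ)-1) = muR n q k := by
        intro k
        simp only [muR]
        push_cast
        ring
      rw [Finset.prod_congr rfl fun k _ => by rw [hμ k]]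
      rw [Finset.prod_range_succ, mul_comm, map_mul, Module.End.mul_apply, hzero, map_zero]
    have hm : Polynomial.aeval (adjE (n+1) q)
        (∏ k ∈ Finset.range (n+2), (X - C (muR (n+1) q k))) fm = 0 := by
      rw [hswm.1]
      have hμ : ∀ k, muR (n+1) q (k+1) - (-1 : ℝ) = muR n q k := by
        intro k
        simp only [muR]
        push_cast
        ring
      rw [Finset.prod_range_succ']
      rw [Finset.prod_congr rfl fun k _ => by rw [hμ k]]
      rw [mul_comm, map_mul, Module.End.mul_apply, hzero, map_zero]
    have hsum : f = fp + fm := by rw [hfm]; abel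
    rw [hsum, map_add, hp, hm, add_zero]


/-- extension by zero of a function to the slice `x r = m` -/
def Ec (r : Fin (n+1)) (m : Fin q) (h : (Fin n → Fin q) → ℝ) : (Fin (n+1) → Fin q) → ℝ :=
  fun x => if x r = m then h (r.removeNth x) else 0

lemma Ec_add (r : Fin (n+1)) (m : Fin q) (u v : (Fin n → Fin q) → ℝ) :
    Ec r m (u + v) = Ec r m u + Ec r m v := by
  funext x
  simp only [Ec, Pi.add_apply]
  split <;> simp

lemma Ec_sub (r : Fin (n+1)) (m : Fin q) (u v : (Fin n → Fin q) → ℝ) :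
    Ec r m (u - v) = Ec r m u - Ec r m v := by
  funext x
  simp only [Ec, Pi.sub_apply]
  split <;> simp

lemma Ec_smul (r : Fin (n+1)) (m : Fin q) (a : ℝ) (u : (Fin n → Fin q) → ℝ) :
    Ec r m (a • u) = a • Ec r m u := by
  funext x
  simp only [Ec, Pi.smul_apply, smul_eq_mul]
  split <;> simp

lemma FlL_add (r : Fin (n+1)) (u v : (Fin n → Fin q) → ℝ) :
    FlL r (u + v) = FlL r u + FlL r v := rfl

lemma FlL_sub (r : Fin (n+1)) (u v : (Fin n → Fin q) → ℝ) :
    FlL r (u - v) = FlL r u - FlL r v := rfl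

lemma FlL_smul (r : Fin (n+1)) (a : ℝ) (u : (Fin n → Fin q) → ℝ) :
    FlL r (a • u) = a • FlL r u := rfl

@[simp] lemma FlL_zero (r : Fin (n+1)) : FlL r (0 : (Fin n → Fin q) → ℝ) = 0 := rfl

lemma adj_Ec (r : Fin (n+1)) (m : Fin q) (h : (Fin n → Fin q) → ℝ) :
    adjE (n+1) q (Ec r m h) = Ec r m (adjE n q h) + FlL r h - Ec r m h := by
  funext x
  rw [adjE_split r _ x]
  have h1 : ∀ k ∈ Finset.univ.erase (x r),
      Ec r m h (Function.update x r k) = if k = m then h (r.removeNth x) else 0 := by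
    intro k _
    simp only [Ec, Function.update_self, removeNth_update]
  rw [Finset.sum_congr rfl h1]
  have h2 : restrictAt (Ec r m h) r (x r) = if x r = m then h else 0 := by
    funext z
    simp only [restrictAt, Ec, Fin.insertNth_apply_same]
    split
    · rw [Fin.removeNth_insertNth]
    · rfl
  rw [h2]
  by_cases hx : x r = m
  · rw [Finset.sum_ite_eq' _ _ _]
    simp only [Finset.mem_erase, hx, Pi.sub_apply, Pi.add_apply]
    simp [Ec, FlL, hx]
  · rw [Finset.sum_ite_eq' _ _ _]
    have hm : m ∈ Finset.univ.erase (x r) := by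
      simp only [Finset.mem_erase, Finset.mem_univ, and_true]
      exact fun hh => hx hh.symm
    simp only [hm, if_true, if_neg hx]
    simp [Ec, FlL, hx]

lemma Cop_FlL (r : Fin (n+1)) (h : (Fin n → Fin q) → ℝ) :
    Cop r (FlL r h) = FlL r (adjE n q h) := by
  refine eq_of_slices r fun c => ?_
  rw [slice_C, slice_FlL, slice_FlL]

lemma adj_FlL (hq1 : 1 ≤ q) (r : Fin (n+1)) (h : (Fin n → Fin q) → ℝ) :
    adjE (n+1) q (FlL r h) = FlL r (adjE n q h) + ((q:ℝ)-1) • FlL r h := by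
  have hA : adjE (n+1) q (FlL r h) = Bop r (FlL r h) + Cop r (FlL r h) := by
    simp [Cop]
  rw [hA, Bop_FlL hq1, Cop_FlL]
  abel

/-- the correction polynomial appearing when restricting -/
noncomputable def Qpl (q : ℕ) (lam : ℕ → ℝ) : List ℕ → ℝ[X]
  | [] => 0
  | k :: L => (L.map (fun k' => (X : ℝ[X]) - C (lam k' + 1))).prod
      + ((X : ℝ[X]) - C (lam k - ((q:ℝ)-1))) * Qpl q lam L

lemma EF (hq1 : 1 ≤ q) (r : Fin (n+1)) (m : Fin q) (lam : ℕ → ℝ) (L : List ℕ)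
    (h : (Fin n → Fin q) → ℝ) :
    Polynomial.aeval (adjE (n+1) q) (L.map (fun k' => (X:ℝ[X]) - C (lam k'))).prod (Ec r m h)
      = Ec r m (Polynomial.aeval (adjE n q)
            (L.map (fun k' => (X:ℝ[X]) - C (lam k' + 1))).prod h)
        + FlL r (Polynomial.aeval (adjE n q) (Qpl q lam L) h) := by
  induction L with
  | nil =>
    simp [Qpl]
  | cons k L ih =>
    rw [List.map_cons, List.prod_cons, map_mul, Module.End.mul_apply, ih]
    have hXC : ∀ (N : ℕ) (T : Module.End ℝ ((Fin N → Fin q) → ℝ)) (v : ℝ)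
        (w : (Fin N → Fin q) → ℝ),
        Polynomial.aeval T (X - C v) w = T w - v • w := by
      intro N T v w
      rw [map_sub, LinearMap.sub_apply, Polynomial.aeval_X, Polynomial.aeval_C,
        Module.algebraMap_end_apply]
    set u := Polynomial.aeval (adjE n q) (L.map (fun k' => (X:ℝ[X]) - C (lam k' + 1))).prod h
      with hu
    set w := Polynomial.aeval (adjE n q) (Qpl q lam L) h with hw
    rw [hXC, map_add, adj_Ec, adj_FlL hq1, List.map_cons, List.prod_cons, map_mul,
      Module.End.mul_apply, hXC, Qpl, map_add, LinearMap.add_apply, map_mul,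
      Module.End.mul_apply, hXC, ← hu, ← hw, Ec_sub, Ec_smul, FlL_add, FlL_sub, FlL_smul]
    module


lemma eval_factor1 (s k : ℕ) :
    (muR n q s) - (muR (n+1) q k + 1) = (q:ℝ) * ((k:ℝ) - (s:ℝ) - 1) := by
  simp only [muR]
  push_cast
  ring

lemma eval_factor2 (s k : ℕ) :
    (muR n q s) - (muR (n+1) q k - ((q:ℝ)-1)) = (q:ℝ) * ((k:ℝ) - (s:ℝ)) := by
  simp only [muR]
  push_cast
  ring

lemma PP_eval_pos (hq1 : 1 ≤ q) (s : ℕ) (L : List ℕ) (hall : ∀ k ∈ L, s + 2 ≤ k) :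
    0 < ((L.map (fun k' => (X:ℝ[X]) - C (muR (n+1) q k' + 1))).prod).eval (muR n q s) := by
  induction L with
  | nil => simp
  | cons k L ih =>
    rw [List.map_cons, List.prod_cons, Polynomial.eval_mul]
    have h1 : ((X:ℝ[X]) - C (muR (n+1) q k + 1)).eval (muR n q s)
        = (q:ℝ) * ((k:ℝ) - (s:ℝ) - 1) := by
      rw [Polynomial.eval_sub, Polynomial.eval_X, Polynomial.eval_C, eval_factor1]
    rw [h1]
    have hk := hall k (List.mem_cons_self)
    have hpos : 0 < (q:ℝ) * ((k:ℝ) - (s:ℝ) - 1) := by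
      apply mul_pos
      · exact_mod_cast (by omega : 0 < q)
      · have : (s:ℝ) + 2 ≤ (k:ℝ) := by exact_mod_cast hk
        linarith
    exact mul_pos hpos (ih fun k' hk' => hall k' (List.mem_cons_of_mem _ hk'))

lemma PP_eval_sign (hq1 : 1 ≤ q) (s : ℕ) (L : List ℕ) (hall : ∀ k ∈ L, k ≤ s) :
    0 < (-1:ℝ)^L.length
        * ((L.map (fun k' => (X:ℝ[X]) - C (muR (n+1) q k' + 1))).prod).eval (muR n q s) := by
  induction L with
  | nil => simp
  | cons k L ih =>
    rw [List.map_cons, List.prod_cons, Polynomial.eval_mul, List.length_cons, pow_succ]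
    have h1 : ((X:ℝ[X]) - C (muR (n+1) q k + 1)).eval (muR n q s)
        = (q:ℝ) * ((k:ℝ) - (s:ℝ) - 1) := by
      rw [Polynomial.eval_sub, Polynomial.eval_X, Polynomial.eval_C, eval_factor1]
    rw [h1]
    have hk := hall k (List.mem_cons_self)
    have hneg : (q:ℝ) * ((k:ℝ) - (s:ℝ) - 1) < 0 := by
      apply mul_neg_of_pos_of_neg
      · exact_mod_cast (by omega : 0 < q)
      · have : (k:ℝ) ≤ (s:ℝ) := by exact_mod_cast hk
        linarith
    have ih' := ih fun k' hk' => hall k' (List.mem_cons_of_mem _ hk')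
    nlinarith [ih', hneg]

lemma Qpl_eval_pos (hq1 : 1 ≤ q) (s : ℕ) :
    ∀ (L : List ℕ), L ≠ [] → L.Pairwise (· < ·) → (∀ k ∈ L, s < k) →
      0 < (Qpl q (muR (n+1) q) L).eval (muR n q s) := by
  intro L
  induction L with
  | nil => intro h; exact absurd rfl h
  | cons k L ih =>
    intro _ hpw hall
    rw [Qpl, Polynomial.eval_add, Polynomial.eval_mul, Polynomial.eval_sub,
      Polynomial.eval_X, Polynomial.eval_C, eval_factor2]
    by_cases hL : L = []
    · subst hL; simp [Qpl]
    · have hq0 : (0:ℝ) < (q:ℝ) := by exact_mod_cast (by omega : 0 < q)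
      have htail : ∀ k' ∈ L, s + 2 ≤ k' := by
        intro k' hk'
        have h1 : k < k' := (List.pairwise_cons.mp hpw).1 k' hk'
        have h2 : s < k := hall k (List.mem_cons_self)
        omega
      have hPP := PP_eval_pos (n := n) hq1 s L htail
      have hQ := ih hL (List.pairwise_cons.mp hpw).2
        (fun k' hk' => hall k' (List.mem_cons_of_mem _ hk'))
      have hks : 0 < (q:ℝ) * ((k:ℝ) - (s:ℝ)) := by
        apply mul_pos hq0
        have : (s:ℝ) < (k:ℝ) := by exact_mod_cast hall k (List.mem_cons_self)
        linarith
      nlinarith [hPP, hQ, hks]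

lemma Qpl_eval_sign (hq1 : 1 ≤ q) (s : ℕ) :
    ∀ (L : List ℕ), L ≠ [] → L.Pairwise (· < ·) → (∀ k ∈ L, k ≤ s) →
      0 < (-1:ℝ)^(L.length+1) * (Qpl q (muR (n+1) q) L).eval (muR n q s) := by
  intro L
  induction L with
  | nil => intro h; exact absurd rfl h
  | cons k L ih =>
    intro _ hpw hall
    rw [Qpl, Polynomial.eval_add, Polynomial.eval_mul, Polynomial.eval_sub,
      Polynomial.eval_X, Polynomial.eval_C, eval_factor2, List.length_cons]
    by_cases hL : L = []
    · subst hL; simp [Qpl]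
    · have hq0 : (0:ℝ) < (q:ℝ) := by exact_mod_cast (by omega : 0 < q)
      have hPP := PP_eval_sign (n := n) hq1 s L (fun k' hk' => hall k' (List.mem_cons_of_mem _ hk'))
      have hQ := ih hL (List.pairwise_cons.mp hpw).2
        (fun k' hk' => hall k' (List.mem_cons_of_mem _ hk'))
      obtain ⟨k1, hk1⟩ := List.exists_mem_of_ne_nil L hL
      have hkk1 : k < k1 := (List.pairwise_cons.mp hpw).1 k1 hk1
      have hk1s : k1 ≤ s := hall k1 (List.mem_cons_of_mem _ hk1)
      have hks : (q:ℝ) * ((k:ℝ) - (s:ℝ)) < 0 := by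
        apply mul_neg_of_pos_of_neg hq0
        have : (k:ℝ) < (s:ℝ) := by exact_mod_cast (by omega : k < s)
        linarith
      have ha : (-1:ℝ)^(L.length+1) = -((-1:ℝ)^L.length) := by rw [pow_succ]; ring
      rw [show L.length + 1 + 1 = L.length + 2 from rfl, pow_succ, pow_succ]
      rw [ha] at hQ
      nlinarith [hPP, hQ, hks]


lemma inU_iff (N Q k : ℕ) (g : (Fin N → Fin Q) → ℝ) :
    inU N Q k g ↔ adjE N Q g = muR N Q k • g := by
  constructor
  · intro h
    funext x
    rw [adjE_apply, ← h x]
    rfl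
  · intro h x
    have h2 := congrFun h x
    rw [adjE_apply] at h2
    rw [h2]
    rfl

end Stmt16

open Stmt16

/-- For `f ∈ U_{[i,j]}(n+1,q)` with `n + 1 ≥ 2`, `j ≥ 1`, a coordinate `r` and a value
`m ∈ Σ_q`: if `f_k^r ≡ 0` for every `k ≠ m`, then `f_m^r ∈ U_{[i,j-1]}(n,q)`
(the zero space when `i > j - 1`). -/
theorem stmt16 (q n i j : ℕ) (hq : 2 ≤ q) (hn : 1 ≤ n) (hj : 1 ≤ j) (hij : i ≤ j)
    (hjn : j ≤ n + 1)
    (f : (Fin (n + 1) → Fin q) → ℝ) (hf : inUIJ (n + 1) q i j f) (r : Fin (n + 1)) (m : Fin q)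
    (h0 : ∀ k : Fin q, k ≠ m → restrictAt f r k = 0) :
    inUIJ n q i (j - 1) (restrictAt f r m) := by
  classical
  obtain ⟨gg, hgg, hfsum⟩ := hf
  set g := restrictAt f r m with hg
  set L : List ℕ := List.Ico i (j+1) with hL
  have hLmem : ∀ k, k ∈ L ↔ i ≤ k ∧ k ≤ j := by
    intro k
    rw [hL, List.Ico.mem]
    omega
  have hLpw : L.Pairwise (· < ·) := List.Ico.pairwise_lt i (j+1)
  have hLne : L ≠ [] := by
    intro h
    have h2 : L.length = j + 1 - i := List.Ico.length i (j+1)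
    rw [h] at h2
    simp at h2
    omega
  have hq1 : 1 ≤ q := by omega
  have hq0 : (q:ℝ) ≠ 0 := Nat.cast_ne_zero.mpr (by omega)
  -- f is the extension by zero of g
  have hfE : f = Ec r m g := by
    funext x
    simp only [Ec]
    split
    · next hx =>
      rw [hg]
      simp only [restrictAt]
      congr 1
      rw [← hx, Fin.insertNth_self_removeNth]
    · next hx =>
      have h2 := congrFun (h0 (x r) hx) (r.removeNth x)
      simp only [restrictAt, Fin.insertNth_self_removeNth, Pi.zero_apply] at h2
      exact h2
  -- the window product annihilates f
  have hkill : Polynomial.aeval (adjE (n+1) q)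
      ((L.map (fun k' => (X:ℝ[X]) - C (muR (n+1) q k'))).prod) f = 0 := by
    rw [hfsum, map_sum]
    refine Finset.sum_eq_zero fun k hk => ?_
    have hkL : (X:ℝ[X]) - C (muR (n+1) q k)
        ∣ (L.map (fun k' => (X:ℝ[X]) - C (muR (n+1) q k'))).prod := by
      apply List.dvd_prod
      rw [List.mem_map]
      exact ⟨k, (hLmem k).mpr (Finset.mem_Icc.mp hk), rfl⟩
    obtain ⟨R, hR⟩ := hkL
    rw [hR, mul_comm, map_mul, Module.End.mul_apply]
    have heig : adjE (n+1) q (gg k) = muR (n+1) q k • gg k :=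
      (inU_iff _ _ _ _).mp (hgg k hk)
    have hzer : Polynomial.aeval (adjE (n+1) q) ((X:ℝ[X]) - C (muR (n+1) q k)) (gg k) = 0 := by
      rw [map_sub, LinearMap.sub_apply, Polynomial.aeval_X, Polynomial.aeval_C,
        Module.algebraMap_end_apply, heig, sub_self]
    rw [hzer, map_zero]
  -- the fundamental identity
  have hEF := EF hq1 r m (muR (n+1) q) L g
  rw [← hfE, hkill] at hEF
  -- the FlL part vanishes
  have hw : Polynomial.aeval (adjE n q) (Qpl q (muR (n+1) q) L) g = 0 := by
    have : Nontrivial (Fin q) := Fin.nontrivial_iff_two_le.mpr hq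
    obtain ⟨m', hm'⟩ := exists_ne m
    funext z
    have h3 := congrFun hEF (r.insertNth m' z)
    simp only [Pi.zero_apply, Pi.add_apply, Ec, FlL, Fin.insertNth_apply_same,
      if_neg hm'] at h3
    have h4 := Fin.removeNth_insertNth (α := fun _ => Fin q) r m' z
    rw [h4] at h3
    rw [Pi.zero_apply]
    linarith [h3]
  -- spectral decomposition of g
  set Aop := adjE n q with hAop
  set μf : ℕ → ℝ := muR n q with hμf
  have hinj : Set.InjOn μf ↑(Finset.range (n+1)) := by
    intro a _ b _ hab
    simp only [hμf, muR] at hab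
    have h5 : (q:ℝ) * a = (q:ℝ) * b := by linarith
    exact_mod_cast mul_left_cancel₀ hq0 h5
  set full : ℝ[X] := ∏ t ∈ Finset.range (n+1), ((X:ℝ[X]) - C (μf t)) with hfull
  have hmin : ∀ v : (Fin n → Fin q) → ℝ, Polynomial.aeval Aop full v = 0 :=
    fun v => minpoly_adj q hq1 n v
  set comp : ℕ → (Fin n → Fin q) → ℝ :=
    fun s => Polynomial.aeval Aop (Lagrange.basis (Finset.range (n+1)) μf s) g with hcomp
  have hbm : ∀ s ∈ Finset.range (n+1), ∃ c : ℝ,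
      ((X:ℝ[X]) - C (μf s)) * Lagrange.basis (Finset.range (n+1)) μf s = C c * full := by
    intro s hs
    refine ⟨∏ t ∈ (Finset.range (n+1)).erase s, (μf s - μf t)⁻¹, ?_⟩
    rw [Lagrange.basis]
    simp_rw [Lagrange.basisDivisor]
    have hCprod : (∏ x ∈ (Finset.range (n+1)).erase s, C ((μf s - μf x)⁻¹))
        = C (∏ t ∈ (Finset.range (n+1)).erase s, (μf s - μf t)⁻¹) :=
      (map_prod (Polynomial.C : ℝ →+* ℝ[X]) _ _).symm
    rw [Finset.prod_mul_distrib, hCprod, hfull, ← Finset.mul_prod_erase _ _ hs]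
    ring
  have hU : ∀ s ∈ Finset.range (n+1), Aop (comp s) = μf s • comp s := by
    intro s hs
    obtain ⟨c, hc⟩ := hbm s hs
    have h5 : Polynomial.aeval Aop
        (((X:ℝ[X]) - C (μf s)) * Lagrange.basis (Finset.range (n+1)) μf s) g = 0 := by
      rw [hc, map_mul, Module.End.mul_apply, hmin g, map_zero]
    rw [map_mul, Module.End.mul_apply, map_sub, LinearMap.sub_apply, Polynomial.aeval_X,
      Polynomial.aeval_C, Module.algebraMap_end_apply, sub_eq_zero] at h5
    exact h5
  have hvan : ∀ s ∈ Finset.range (n+1), (s < i ∨ j ≤ s) → comp s = 0 := by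
    intro s hs hcase
    set Qe : ℝ := (Qpl q (muR (n+1) q) L).eval (μf s) with hQe
    have hQene : Qe ≠ 0 := by
      rcases hcase with hlt | hge
      · have := Qpl_eval_pos (n := n) hq1 s L hLne hLpw
          (fun k hk => by have := (hLmem k).mp hk; omega)
        exact this.ne'
      · have hsgn := Qpl_eval_sign (n := n) hq1 s L hLne hLpw
          (fun k hk => by have := (hLmem k).mp hk; omega)
        intro hzero
        rw [hQe] at hzero
        rw [hzero, mul_zero] at hsgn
        exact lt_irrefl 0 hsgn
    obtain ⟨R, hR⟩ := Polynomial.X_sub_C_dvd_sub_C_eval (a := μf s) (p := Qpl q (muR (n+1) q) L)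
    obtain ⟨c, hc⟩ := hbm s hs
    have e1 : Qe • comp s = Polynomial.aeval Aop
        (C Qe * Lagrange.basis (Finset.range (n+1)) μf s) g := by
      rw [map_mul, Module.End.mul_apply, Polynomial.aeval_C, Module.algebraMap_end_apply]
    have e2 : C Qe * Lagrange.basis (Finset.range (n+1)) μf s
        = (Qpl q (muR (n+1) q) L) * Lagrange.basis (Finset.range (n+1)) μf s
          - (R * C c) * full := by
      have h6 : (C Qe : ℝ[X]) = Qpl q (muR (n+1) q) L - ((X:ℝ[X]) - C (μf s)) * R := by
        rw [← hR]
        ring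
      rw [h6, sub_mul]
      congr 1
      have h8 : ((X:ℝ[X]) - C (μf s)) * R * Lagrange.basis (Finset.range (n+1)) μf s
          = R * (((X:ℝ[X]) - C (μf s)) * Lagrange.basis (Finset.range (n+1)) μf s) := by
        ring
      rw [h8, hc]
      ring
    rw [e2, map_sub, LinearMap.sub_apply, mul_comm (Qpl q (muR (n+1) q) L) _, map_mul,
      Module.End.mul_apply, hw, map_zero, map_mul, Module.End.mul_apply, hmin g, map_zero,
      sub_zero] at e1
    exact (smul_eq_zero.mp e1).resolve_left hQene
  have hgdec : g = ∑ s ∈ Finset.range (n+1), comp s := by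
    have hone := Lagrange.sum_basis hinj ⟨0, Finset.mem_range.mpr (Nat.succ_pos n)⟩
    have h7 : Polynomial.aeval Aop
        (∑ s ∈ Finset.range (n+1), Lagrange.basis (Finset.range (n+1)) μf s) g = g := by
      rw [hone, map_one, Module.End.one_apply]
    rw [← h7, map_sum, LinearMap.sum_apply]
  refine ⟨comp, ?_, ?_⟩
  · intro k hk
    rw [inU_iff]
    have hkr : k ∈ Finset.range (n+1) := by
      have := Finset.mem_Icc.mp hk
      rw [Finset.mem_range]
      omega
    exact hU k hkr
  · have hsub : Finset.Icc i (j-1) ⊆ Finset.range (n+1) := by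
      intro s hs
      have := Finset.mem_Icc.mp hs
      rw [Finset.mem_range]
      omega
    have hzero : ∀ s ∈ Finset.range (n+1), s ∉ Finset.Icc i (j-1) → comp s = 0 := by
      intro s hs hns
      rw [Finset.mem_Icc] at hns
      exact hvan s hs (by omega)
    rw [hgdec]
    exact (Finset.sum_subset hsub hzero).symm
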